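/- Let Y be a real-valued random variable with all absolute moments finite and fix a nonzero real λ. Then for all integers n≥j≥0, {n brace j}_{Y,λ} = Σ_{l=j}^{n} Σ_{k=l}^{n} λ^{k−l} (−1)^{n−k} S_{1,λ}^Y(n,k) L(k,l) {l brace j}_λ. -/

import Mathlib

open MeasureTheory Finset

noncomputable section

/-- The degenerate falling factorial `(x)_{n,λ} = x(x-λ)⋯(x-(n-1)λ)`. -/
def dff (lam x : ℝ) (n : ℕ) : ℝ := ∏ i ∈ Finset.range n, (x - i * lam)

/-- The degenerate rising factorial `⟨x⟩_{n,λ} = x(x+λ)⋯(x+(n-1)λ)`. -/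
def drf (lam x : ℝ) (n : ℕ) : ℝ := ∏ i ∈ Finset.range n, (x + i * lam)

/-- The ordinary falling factorial `(x)_n = x(x-1)⋯(x-n+1)`. -/
def ffall (x : ℝ) (n : ℕ) : ℝ := ∏ i ∈ Finset.range n, (x - i)

/-- The ordinary rising factorial `⟨x⟩_n = x(x+1)⋯(x+n-1)`. -/
def frise (x : ℝ) (n : ℕ) : ℝ := ∏ i ∈ Finset.range n, (x + i)

/-- Composition `f ∘ g` of formal power series, valid when `g` has zero constant term. -/
def pscomp (f g : PowerSeries ℝ) : PowerSeries ℝ :=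
  PowerSeries.mk fun n =>
    ∑ k ∈ Finset.range (n + 1), PowerSeries.coeff (R := ℝ) k f * PowerSeries.coeff (R := ℝ) n (g ^ k)

/-- The degenerate moment generating series `F_Y = Σ_{n≥0} E[(Y)_{n,λ}] X^n/n!`. -/
def momSeries (lam : ℝ) {Ω : Type*} [MeasurableSpace Ω] (μ : Measure Ω) (Y : Ω → ℝ) :
    PowerSeries ℝ :=
  PowerSeries.mk fun n => (∫ ω, dff lam (Y ω) n ∂μ) / (n.factorial : ℝ)

/-- Taylor series at `u = 0` of the degenerate logarithm `log_λ(1+u)`: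
`Σ_{n≥1} λ^{n-1} (1)_{n,1/λ} u^n/n!`. -/
def degLogSeries (lam : ℝ) : PowerSeries ℝ :=
  PowerSeries.mk fun n => if n = 0 then 0 else lam ^ (n - 1) * dff (1 / lam) 1 n / (n.factorial : ℝ)

/-- `G_Y`, the degenerate cumulant generating series `log_{-λ}(F_Y)`, i.e. the substitution of
`F_Y - 1` into the Taylor series of `log_{-λ}(1+u)`. -/
def cumSeries (lam : ℝ) {Ω : Type*} [MeasurableSpace Ω] (μ : Measure Ω) (Y : Ω → ℝ) :
    PowerSeries ℝ :=
  pscomp (degLogSeries (-lam)) (momSeries lam μ Y - 1)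

/-- The degenerate cumulants `κ_{n,λ}(Y) := n!·(coefficient of X^n in G_Y)`. -/
def degCumulant (lam : ℝ) {Ω : Type*} [MeasurableSpace Ω] (μ : Measure Ω) (Y : Ω → ℝ)
    (n : ℕ) : ℝ :=
  (n.factorial : ℝ) * PowerSeries.coeff (R := ℝ) n (cumSeries lam μ Y)

/-- The probabilistic degenerate Stirling numbers of the second kind
`{n brace k}_{Y,λ} := n!·(coefficient of X^n in (F_Y - 1)^k/k!)`. -/
def braceY (lam : ℝ) {Ω : Type*} [MeasurableSpace Ω] (μ : Measure Ω) (Y : Ω → ℝ)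
    (n k : ℕ) : ℝ :=
  (n.factorial : ℝ) * PowerSeries.coeff (R := ℝ) n ((momSeries lam μ Y - 1) ^ k) / (k.factorial : ℝ)

/-- The probabilistic degenerate Stirling numbers of the first kind, defined by
`(-1)^{n-k} S_{1,λ}^Y(n,k) := n!·(coefficient of X^n in G_Y^k/k!)`. -/
def S1Y (lam : ℝ) {Ω : Type*} [MeasurableSpace Ω] (μ : Measure Ω) (Y : Ω → ℝ)
    (n k : ℕ) : ℝ :=
  (-1 : ℝ) ^ (n - k) * ((n.factorial : ℝ) * PowerSeries.coeff (R := ℝ) n ((cumSeries lam μ Y) ^ k) / (k.factorial : ℝ))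

/-- Taylor series of `log(1+u)`: `Σ_{n≥1} (-1)^{n-1} u^n/n`. -/
def logSeries : PowerSeries ℝ :=
  PowerSeries.mk fun n => if n = 0 then 0 else (-1 : ℝ) ^ (n - 1) / n

/-- `F^x := exp (x · Log F)` for a power series `F` with constant term `1`. -/
def psPow (F : PowerSeries ℝ) (x : ℝ) : PowerSeries ℝ :=
  pscomp (PowerSeries.exp ℝ) (PowerSeries.C (R := ℝ) x * pscomp logSeries (F - 1))

/-- `F ↦ F/X`, i.e. the shift sending `Σ a_{n+1} X^{n+1}` (with `a_0 = 0`) to `Σ a_{n+1} X^n`. -/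
def shiftDown (F : PowerSeries ℝ) : PowerSeries ℝ :=
  PowerSeries.mk fun n => PowerSeries.coeff (R := ℝ) (n + 1) F

/-- The probabilistic degenerate Bernoulli polynomials associated with `Y`:
`Σ_{n≥0} β_{n,λ}^Y(x) X^n/n! = (X/(F_Y-1))·F_Y^x`. -/
def probBernoulli (lam : ℝ) {Ω : Type*} [MeasurableSpace Ω] (μ : Measure Ω) (Y : Ω → ℝ)
    (n : ℕ) (x : ℝ) : ℝ :=
  (n.factorial : ℝ) *
    PowerSeries.coeff (R := ℝ) n ((shiftDown (momSeries lam μ Y - 1))⁻¹ * psPow (momSeries lam μ Y) x)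

/-- The probabilistic degenerate Euler polynomials associated with `Y`:
`Σ_{n≥0} 𝓔_{n,λ}^Y(x) X^n/n! = (2/(F_Y+1))·F_Y^x`. -/
def probEuler (lam : ℝ) {Ω : Type*} [MeasurableSpace Ω] (μ : Measure Ω) (Y : Ω → ℝ)
    (n : ℕ) (x : ℝ) : ℝ :=
  (n.factorial : ℝ) *
    PowerSeries.coeff (R := ℝ) n
      (PowerSeries.C (R := ℝ) 2 * (momSeries lam μ Y + 1)⁻¹ * psPow (momSeries lam μ Y) x)

namespace PsTool

open PowerSeries Polynomial

variable {f g h f₁ f₂ : PowerSeries ℝ}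

lemma coeff_pscomp (n : ℕ) :
    PowerSeries.coeff (R := ℝ) n (pscomp f g) = ∑ k ∈ range (n + 1), PowerSeries.coeff (R := ℝ) k f * PowerSeries.coeff (R := ℝ) n (g ^ k) := by
  simp [pscomp]

lemma coeff_pow_zero (hg : PowerSeries.constantCoeff (R := ℝ) g = 0) {n k : ℕ} (h : n < k) :
    PowerSeries.coeff (R := ℝ) n (g ^ k) = 0 := by
  have : (X : PowerSeries ℝ) ^ k ∣ g ^ k :=
    pow_dvd_pow_of_dvd (PowerSeries.X_dvd_iff.2 hg) k
  exact PowerSeries.X_pow_dvd_iff.1 this n h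

lemma constantCoeff_pscomp : PowerSeries.constantCoeff (R := ℝ) (pscomp f g) = PowerSeries.coeff (R := ℝ) 0 f := by
  rw [← coeff_zero_eq_constantCoeff_apply, coeff_pscomp]
  simp

lemma pscomp_eq_eval₂ (hg : PowerSeries.constantCoeff (R := ℝ) g = 0) {n N : ℕ} (hN : n < N) (f : PowerSeries ℝ) :
    PowerSeries.coeff (R := ℝ) n (pscomp f g) = PowerSeries.coeff (R := ℝ) n (Polynomial.eval₂ (PowerSeries.C (R := ℝ)) g (trunc N f)) := by
  obtain ⟨m, rfl⟩ : ∃ m, N = m + 1 := ⟨N - 1, by omega⟩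
  rw [Polynomial.eval₂_eq_sum_range' (PowerSeries.C (R := ℝ)) (natDegree_trunc_lt f m) g]
  rw [map_sum, coeff_pscomp]
  have hcongr : ∀ i ∈ range (m + 1),
      PowerSeries.coeff (R := ℝ) n ((PowerSeries.C (R := ℝ)) ((trunc (m + 1) f).coeff i) * g ^ i)
        = PowerSeries.coeff (R := ℝ) i f * PowerSeries.coeff (R := ℝ) n (g ^ i) := by
    intro i hi
    rw [PowerSeries.coeff_C_mul, PowerSeries.coeff_trunc, if_pos (Finset.mem_range.1 hi)]
  rw [Finset.sum_congr rfl hcongr]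
  apply Finset.sum_subset (Finset.range_subset_range.2 (by omega : n + 1 ≤ m + 1))
  intro i _ hi
  rw [coeff_pow_zero hg (by simpa using hi), mul_zero]

lemma coeff_eval₂ (hg : PowerSeries.constantCoeff (R := ℝ) g = 0) (P : Polynomial ℝ) (n : ℕ) :
    PowerSeries.coeff (R := ℝ) n (Polynomial.eval₂ (PowerSeries.C (R := ℝ)) g P)
      = ∑ i ∈ range (n + 1), P.coeff i * PowerSeries.coeff (R := ℝ) n (g ^ i) := by
  have hB : P.natDegree < max P.natDegree n + 1 := by omega
  rw [Polynomial.eval₂_eq_sum_range' (PowerSeries.C (R := ℝ)) hB g, map_sum]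
  have hcongr : ∀ i ∈ range (max P.natDegree n + 1),
      PowerSeries.coeff (R := ℝ) n ((PowerSeries.C (R := ℝ)) (P.coeff i) * g ^ i) = P.coeff i * PowerSeries.coeff (R := ℝ) n (g ^ i) :=
    fun i _ => PowerSeries.coeff_C_mul _ _ _
  rw [Finset.sum_congr rfl hcongr]
  symm
  apply Finset.sum_subset (Finset.range_subset_range.2 (by omega : n + 1 ≤ max P.natDegree n + 1))
  intro i _ hi
  rw [coeff_pow_zero hg (by simpa using hi), mul_zero]

lemma pscomp_mul (hg : PowerSeries.constantCoeff (R := ℝ) g = 0) :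
    pscomp (f₁ * f₂) g = pscomp f₁ g * pscomp f₂ g := by
  ext n
  rw [pscomp_eq_eval₂ hg n.lt_succ_self, coeff_eval₂ hg]
  have step1 : ∀ i ∈ range (n + 1),
      (trunc (n+1) (f₁ * f₂)).coeff i * PowerSeries.coeff (R := ℝ) n (g ^ i)
        = (trunc (n+1) f₁ * trunc (n+1) f₂).coeff i * PowerSeries.coeff (R := ℝ) n (g ^ i) := by
    intro i hi
    have hi' : i < n + 1 := Finset.mem_range.1 hi
    congr 1
    rw [PowerSeries.coeff_trunc, if_pos hi']
    have := PowerSeries.coeff_mul_eq_coeff_trunc_mul_trunc f₁ f₂ hi'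
    rw [this, ← Polynomial.coeff_coe, Polynomial.coe_mul]
  rw [Finset.sum_congr rfl step1, ← coeff_eval₂ hg, Polynomial.eval₂_mul,
    PowerSeries.coeff_mul, PowerSeries.coeff_mul]
  apply Finset.sum_congr rfl
  intro p hp
  have h1 : p.1 < n + 1 := Nat.lt_succ_of_le (Finset.HasAntidiagonal.antidiagonal.fst_le hp)
  have h2 : p.2 < n + 1 := Nat.lt_succ_of_le (Finset.HasAntidiagonal.antidiagonal.snd_le hp)
  rw [← pscomp_eq_eval₂ hg h1, ← pscomp_eq_eval₂ hg h2]

lemma pscomp_one (hg : PowerSeries.constantCoeff (R := ℝ) g = 0) : pscomp 1 g = 1 := by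
  ext n
  rw [coeff_pscomp]
  simp only [PowerSeries.coeff_one]
  rw [Finset.sum_eq_single 0]
  · simp
  · intro k _ hk; simp [hk]
  · simp

lemma pscomp_pow (hg : PowerSeries.constantCoeff (R := ℝ) g = 0) (k : ℕ) :
    pscomp (f ^ k) g = (pscomp f g) ^ k := by
  induction k with
  | zero => simpa using pscomp_one hg
  | succ k ih => rw [pow_succ, pow_succ, pscomp_mul hg, ih]

lemma pscomp_X (hg : PowerSeries.constantCoeff (R := ℝ) g = 0) : pscomp X g = g := by
  ext n
  rw [coeff_pscomp]
  rcases Nat.eq_zero_or_pos n with rfl | hn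
  · simpa using hg.symm
  · rw [Finset.sum_eq_single 1]
    · simp
    · intro k _ hk; simp [PowerSeries.coeff_X, hk]
    · intro hmem; exact absurd (Finset.mem_range.2 (by omega)) hmem

lemma pscomp_add (f₁ f₂ g : PowerSeries ℝ) :
    pscomp (f₁ + f₂) g = pscomp f₁ g + pscomp f₂ g := by
  ext n
  simp [coeff_pscomp, add_mul, Finset.sum_add_distrib]

lemma pscomp_sub (f₁ f₂ g : PowerSeries ℝ) :
    pscomp (f₁ - f₂) g = pscomp f₁ g - pscomp f₂ g := by
  ext n
  simp [coeff_pscomp, sub_mul, Finset.sum_sub_distrib]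

lemma pscomp_smul (c : ℝ) (f g : PowerSeries ℝ) :
    pscomp (c • f) g = c • pscomp f g := by
  ext n
  simp [coeff_pscomp, mul_assoc, Finset.mul_sum]

lemma pscomp_rescale_smul (c : ℝ) (f g : PowerSeries ℝ) :
    pscomp (PowerSeries.rescale c f) g = pscomp f (c • g) := by
  ext n
  rw [coeff_pscomp, coeff_pscomp]
  apply Finset.sum_congr rfl
  intro k _
  rw [PowerSeries.coeff_rescale]
  have : (c • g) ^ k = (c ^ k) • g ^ k := smul_pow c g k
  rw [this, PowerSeries.coeff_smul, smul_eq_mul]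
  ring

lemma pscomp_assoc (hg : PowerSeries.constantCoeff (R := ℝ) g = 0) (hh : PowerSeries.constantCoeff (R := ℝ) h = 0) :
    pscomp f (pscomp g h) = pscomp (pscomp f g) h := by
  ext n
  rw [coeff_pscomp, coeff_pscomp]
  have hstep : ∀ k ∈ range (n + 1),
      PowerSeries.coeff (R := ℝ) k f * PowerSeries.coeff (R := ℝ) n ((pscomp g h) ^ k)
        = ∑ m ∈ range (n + 1), PowerSeries.coeff (R := ℝ) k f * (PowerSeries.coeff (R := ℝ) m (g ^ k) * PowerSeries.coeff (R := ℝ) n (h ^ m)) := by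
    intro k _
    rw [← pscomp_pow hh, coeff_pscomp, Finset.mul_sum]
  rw [Finset.sum_congr rfl hstep]
  have hstep2 : ∀ m ∈ range (n + 1),
      PowerSeries.coeff (R := ℝ) m (pscomp f g) * PowerSeries.coeff (R := ℝ) n (h ^ m)
        = ∑ k ∈ range (n + 1), PowerSeries.coeff (R := ℝ) k f * PowerSeries.coeff (R := ℝ) m (g ^ k) * PowerSeries.coeff (R := ℝ) n (h ^ m) := by
    intro m hm
    rw [coeff_pscomp, Finset.sum_mul]
    apply Finset.sum_subset (Finset.range_subset_range.2 (Nat.succ_le_succ (Nat.lt_succ_iff.1 (Finset.mem_range.1 hm))))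
    intro k _ hk
    have : m < k := by simpa using hk
    rw [coeff_pow_zero hg this, mul_zero, zero_mul]
  rw [Finset.sum_congr rfl hstep2, Finset.sum_comm]
  apply Finset.sum_congr rfl; intro k _
  apply Finset.sum_congr rfl; intro m _
  ring


section Bin
open PowerSeries Polynomial

lemma ffall_eval (x : ℝ) (n : ℕ) : ffall x n = (descPochhammer ℝ n).eval x := by
  induction n with
  | zero => simp [ffall]
  | succ n ih => rw [ffall, Finset.prod_range_succ, ← ffall, ih, descPochhammer_succ_eval]

lemma rchoose_eq (x : ℝ) (n : ℕ) : Ring.choose x n = ffall x n / n.factorial := by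
  have h := Ring.descPochhammer_eq_factorial_smul_choose (R := ℝ) x n
  rw [Polynomial.descPochhammer_smeval_eq_ascPochhammer, Polynomial.ascPochhammer_smeval_eq_eval,
    ← descPochhammer_eval_eq_ascPochhammer, ← ffall_eval, nsmul_eq_mul] at h
  field_simp [h]
  rw [h]; ring

lemma rchoose_nat (b k : ℕ) : Ring.choose ((b : ℝ)) k = (b.choose k : ℝ) := by
  exact_mod_cast Ring.choose_natCast (R := ℝ) b k

lemma ffall_nat (b k : ℕ) : ffall (b : ℝ) k = (b.choose k : ℝ) * k.factorial := by
  have := rchoose_eq (b : ℝ) k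
  rw [rchoose_nat] at this
  have hk : (k.factorial : ℝ) ≠ 0 := by exact_mod_cast k.factorial_ne_zero
  field_simp at this
  linarith [this]

def Bps (a : ℝ) : PowerSeries ℝ := PowerSeries.mk fun n => Ring.choose a n

lemma coeff_Bps (a : ℝ) (n : ℕ) : PowerSeries.coeff (R := ℝ) n (Bps a) = Ring.choose a n := coeff_mk _ _

lemma Bps_mul (a b : ℝ) : Bps a * Bps b = Bps (a + b) := by
  ext n
  rw [PowerSeries.coeff_mul, coeff_Bps, Ring.add_choose_eq n (mul_comm a b)]
  simp [coeff_Bps]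

lemma Bps_zero : Bps 0 = 1 := by
  ext n
  rw [coeff_Bps, ← Nat.cast_zero, rchoose_nat]
  cases n <;> simp [Nat.choose]

lemma Bps_one_eq : Bps 1 = 1 + PowerSeries.X := by
  ext n
  rw [coeff_Bps, ← Nat.cast_one, rchoose_nat, map_add, PowerSeries.coeff_one, PowerSeries.coeff_X]
  match n with
  | 0 => simp
  | 1 => simp
  | (n+2) => simp [Nat.choose_eq_zero_of_lt]

lemma Bps_pow (a : ℝ) (b : ℕ) : Bps a ^ b = Bps (b * a) := by
  induction b with
  | zero => simpa using Bps_zero.symm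
  | succ b ih => rw [pow_succ, ih, Bps_mul]; push_cast; ring_nf

lemma constantCoeff_Bm1 (a : ℝ) : PowerSeries.constantCoeff (R := ℝ) (Bps a - 1) = 0 := by
  rw [← coeff_zero_eq_constantCoeff_apply, map_sub, coeff_Bps, Ring.choose_zero_right]
  simp

lemma coeff_one_add_pow {S : PowerSeries ℝ} (hS : PowerSeries.constantCoeff (R := ℝ) S = 0) (b n : ℕ) :
    PowerSeries.coeff (R := ℝ) n ((1 + S) ^ b) = ∑ k ∈ range (n + 1), (b.choose k : ℝ) * PowerSeries.coeff (R := ℝ) n (S ^ k) := by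
  rw [add_comm, add_pow, map_sum]
  have h1 : ∀ k ∈ range (b + 1),
      PowerSeries.coeff (R := ℝ) n (S ^ k * 1 ^ (b - k) * ((b.choose k : ℕ) : ℝ⟦X⟧))
        = (b.choose k : ℝ) * PowerSeries.coeff (R := ℝ) n (S ^ k) := by
    intro k _
    rw [one_pow, mul_one, ← map_natCast (PowerSeries.C (R := ℝ)) (b.choose k), PowerSeries.coeff_mul_C]
    ring
  rw [Finset.sum_congr rfl h1]
  rw [Finset.sum_subset (Finset.range_subset_range.2 (by omega : b + 1 ≤ max b n + 1))
    (fun k _ hk => by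
      rw [Nat.choose_eq_zero_of_lt (by simpa using hk), Nat.cast_zero, zero_mul])]
  symm
  apply Finset.sum_subset (Finset.range_subset_range.2 (by omega : n + 1 ≤ max b n + 1))
  intro k _ hk
  rw [coeff_pow_zero hS (by simpa using hk), mul_zero]

lemma bin_sum (α β : ℝ) (n : ℕ) :
    ∑ k ∈ range (n + 1), Ring.choose β k * PowerSeries.coeff (R := ℝ) n ((Bps α - 1) ^ k)
      = Ring.choose (α * β) n := by
  set P : Polynomial ℝ :=
    (∑ k ∈ range (n + 1), Polynomial.C (PowerSeries.coeff (R := ℝ) n ((Bps α - 1) ^ k) * (k.factorial : ℝ)⁻¹) *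
      descPochhammer ℝ k)
    - Polynomial.C ((n.factorial : ℝ)⁻¹) *
        (descPochhammer ℝ n).comp (Polynomial.C α * Polynomial.X) with hP
  have hev : ∀ x : ℝ, P.eval x
      = (∑ k ∈ range (n + 1), Ring.choose x k * PowerSeries.coeff (R := ℝ) n ((Bps α - 1) ^ k))
        - Ring.choose (α * x) n := by
    intro x
    rw [hP, Polynomial.eval_sub, Polynomial.eval_finset_sum]
    congr 1
    · apply Finset.sum_congr rfl
      intro k _
      rw [Polynomial.eval_mul, Polynomial.eval_C, ← ffall_eval, rchoose_eq]
      ring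
    · rw [Polynomial.eval_mul, Polynomial.eval_C, Polynomial.eval_comp, Polynomial.eval_mul,
        Polynomial.eval_C, Polynomial.eval_X, ← ffall_eval, rchoose_eq]
      ring
  have hroot : ∀ b : ℕ, P.eval (b : ℝ) = 0 := by
    intro b
    rw [hev, sub_eq_zero]
    have h1 : ∀ k ∈ range (n + 1),
        Ring.choose ((b : ℕ) : ℝ) k * PowerSeries.coeff (R := ℝ) n ((Bps α - 1) ^ k)
          = (b.choose k : ℝ) * PowerSeries.coeff (R := ℝ) n ((Bps α - 1) ^ k) := fun k _ => by rw [rchoose_nat]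
    rw [Finset.sum_congr rfl h1, ← coeff_one_add_pow (constantCoeff_Bm1 α) b n]
    have h2 : (1 : ℝ⟦X⟧) + (Bps α - 1) = Bps α := by ring
    rw [h2, Bps_pow, coeff_Bps, mul_comm α (b : ℝ)]
  have hP0 : P = 0 := by
    have hsub : Set.range ((↑·) : ℕ → ℝ) ⊆ {x | P.IsRoot x} := by
      rintro x ⟨b, rfl⟩
      exact hroot b
    exact Polynomial.eq_zero_of_infinite_isRoot P
      ((Set.infinite_range_of_injective (Nat.cast_injective (R := ℝ))).mono hsub)
  have hβ := hev β
  rw [hP0, Polynomial.eval_zero] at hβ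
  linarith [hβ]

lemma pscomp_Bm1 (α β : ℝ) :
    pscomp (Bps β - 1) (Bps α - 1) = Bps (α * β) - 1 := by
  ext n
  rw [coeff_pscomp, map_sub, coeff_Bps]
  have h1 : ∀ k ∈ range (n + 1),
      PowerSeries.coeff (R := ℝ) k (Bps β - 1) * PowerSeries.coeff (R := ℝ) n ((Bps α - 1) ^ k)
        = Ring.choose β k * PowerSeries.coeff (R := ℝ) n ((Bps α - 1) ^ k)
          - (if k = 0 then PowerSeries.coeff (R := ℝ) n (1 : ℝ⟦X⟧) else 0) := by
    intro k _
    match k with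
    | 0 =>
      rw [pow_zero, if_pos rfl, map_sub, coeff_Bps, Ring.choose_zero_right]
      simp
    | (k+1) =>
      rw [if_neg (Nat.succ_ne_zero k), map_sub, coeff_Bps, PowerSeries.coeff_one,
        if_neg (Nat.succ_ne_zero k)]
      ring
  rw [Finset.sum_congr rfl h1, Finset.sum_sub_distrib, bin_sum]
  rw [Finset.sum_ite_eq' (range (n + 1)) 0 (fun _ => PowerSeries.coeff (R := ℝ) n (1 : ℝ⟦X⟧)),
    if_pos (Finset.mem_range.2 (Nat.succ_pos n))]

end Bin

section Lam

def degLogSeries' (lam : ℝ) : PowerSeries ℝ :=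
  PowerSeries.mk fun n => if n = 0 then 0 else lam ^ (n - 1) * dff (1 / lam) 1 n / (n.factorial : ℝ)

def Em1 (lam : ℝ) : PowerSeries ℝ :=
  PowerSeries.mk fun m => if m = 0 then 0 else dff lam 1 m / (m.factorial : ℝ)

def geomS (lam : ℝ) : PowerSeries ℝ :=
  PowerSeries.mk fun m => if m = 0 then 0 else lam ^ (m - 1)

variable {lam : ℝ} (hlam : lam ≠ 0)

lemma cc_degLog : PowerSeries.constantCoeff (R := ℝ) (degLogSeries' lam) = 0 := by
  rw [← coeff_zero_eq_constantCoeff_apply, degLogSeries', coeff_mk, if_pos rfl]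

lemma cc_Em1 : PowerSeries.constantCoeff (R := ℝ) (Em1 lam) = 0 := by
  rw [← coeff_zero_eq_constantCoeff_apply, Em1, coeff_mk, if_pos rfl]

lemma cc_geomS : PowerSeries.constantCoeff (R := ℝ) (geomS lam) = 0 := by
  rw [← coeff_zero_eq_constantCoeff_apply, geomS, coeff_mk, if_pos rfl]

include hlam in
lemma one_sub_smul_degLog : (1 : ℝ⟦X⟧) - lam • degLogSeries' (-lam) = Bps (-lam) := by
  ext n
  rw [map_sub, PowerSeries.coeff_smul, coeff_Bps, degLogSeries', coeff_mk]
  match n with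
  | 0 =>
    rw [if_pos rfl, Ring.choose_zero_right]
    simp
  | (m+1) =>
    rw [if_neg (Nat.succ_ne_zero m), PowerSeries.coeff_one, if_neg (Nat.succ_ne_zero m),
      rchoose_eq]
    rw [smul_eq_mul]
    have key : lam * ((-lam) ^ (m + 1 - 1) * dff (1 / -lam) 1 (m + 1) / ((m+1).factorial : ℝ))
        = -(ffall (-lam) (m + 1) / ((m+1).factorial : ℝ)) := by
      have h1 : ffall (-lam) (m + 1) = ∏ i ∈ range (m + 1), ((-lam) * (1 - (i : ℝ) * (1 / -lam))) := by
        rw [ffall]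
        apply Finset.prod_congr rfl
        intro i _
        have h0 : (i : ℝ) * (1 / -lam) = -(i * lam⁻¹) := by
          rw [one_div, inv_neg, mul_neg]
        rw [h0, sub_neg_eq_add, mul_add, mul_one, mul_comm (i : ℝ) lam⁻¹, ← mul_assoc]
        have h1 : -lam * lam⁻¹ = -1 := by
          rw [neg_mul, mul_inv_cancel₀ hlam]
        rw [h1]
        ring
      rw [h1, Finset.prod_mul_distrib, Finset.prod_const, Finset.card_range, dff]
      have h2 : (m + 1) - 1 = m := rfl
      rw [h2, pow_succ]
      field_simp
    rw [key]
    ring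

include hlam in
lemma Em1_eq_rescale : Em1 lam = PowerSeries.rescale lam (Bps lam⁻¹ - 1) := by
  ext n
  rw [Em1, coeff_mk, PowerSeries.coeff_rescale, map_sub, coeff_Bps]
  match n with
  | 0 =>
    rw [if_pos rfl, Ring.choose_zero_right]
    simp
  | (m+1) =>
    rw [if_neg (Nat.succ_ne_zero m), PowerSeries.coeff_one, if_neg (Nat.succ_ne_zero m),
      rchoose_eq]
    have h1 : dff lam 1 (m + 1) = lam ^ (m + 1) * ffall lam⁻¹ (m + 1) := by
      have h2 : dff lam 1 (m + 1) = ∏ i ∈ range (m + 1), (lam * (lam⁻¹ - (i : ℝ))) := by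
        rw [dff]
        apply Finset.prod_congr rfl
        intro i _
        field_simp
      rw [h2, Finset.prod_mul_distrib, Finset.prod_const, Finset.card_range, ffall]
    rw [h1]
    ring

lemma geom_mul_eq_X : geomS lam * (1 - lam • PowerSeries.X) = PowerSeries.X := by
  have h : geomS lam * (1 - lam • PowerSeries.X)
      = geomS lam - lam • (geomS lam * PowerSeries.X) := by
    rw [mul_sub, mul_one]
    congr 1
    exact mul_smul_comm lam (geomS lam) PowerSeries.X
  rw [h]
  ext n
  rw [map_sub, PowerSeries.coeff_smul]
  match n with
  | 0 => simp [geomS]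
  | (m+1) =>
    rw [PowerSeries.coeff_succ_mul_X, PowerSeries.coeff_X, geomS, coeff_mk, coeff_mk]
    match m with
    | 0 => simp
    | (k+1) =>
      rw [if_neg (Nat.succ_ne_zero _), if_neg (Nat.succ_ne_zero k), if_neg (by omega)]
      have h1 : (k + 1 + 1) - 1 = k + 1 := rfl
      have h2 : (k + 1) - 1 = k := rfl
      rw [h1, h2, smul_eq_mul, pow_succ]
      ring

lemma coeff_geomS_pow (l m : ℕ) :
    PowerSeries.coeff (R := ℝ) (l + m) (geomS lam ^ l) = lam ^ m * (((l + m - 1).choose m : ℕ) : ℝ) := by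
  induction l generalizing m with
  | zero =>
    rw [pow_zero]
    match m with
    | 0 => simp
    | (m+1) =>
      rw [PowerSeries.coeff_one, if_neg (by omega), Nat.choose_eq_zero_of_lt (by omega)]
      simp
  | succ l ih =>
    rw [pow_succ, PowerSeries.coeff_mul, Finset.Nat.sum_antidiagonal_eq_sum_range_succ_mk]
    have hsub : Finset.Icc l (l + m) ⊆ range (l + 1 + m + 1) := by
      intro t ht
      rw [Finset.mem_Icc] at ht
      rw [Finset.mem_range]
      omega
    rw [← Finset.sum_subset hsub ?vanish]
    case vanish =>
      intro k hk hk2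
      rw [Finset.mem_range] at hk
      rw [Finset.mem_Icc, not_and_or] at hk2
      rcases hk2 with h | h
      · rw [coeff_pow_zero cc_geomS (by omega), zero_mul]
      · have hk0 : l + 1 + m - k = 0 := by omega
        rw [hk0, geomS, coeff_mk, if_pos rfl, mul_zero]
    rw [← Finset.Ico_add_one_right_eq_Icc, Finset.sum_Ico_eq_sum_range]
    have hran : l + m + 1 - l = m + 1 := by omega
    rw [hran]
    have hterm : ∀ i ∈ range (m + 1),
        PowerSeries.coeff (R := ℝ) (l + i) (geomS lam ^ l) * PowerSeries.coeff (R := ℝ) (l + 1 + m - (l + i)) (geomS lam)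
          = lam ^ m * ((l + i - 1).choose i : ℝ) := by
      intro i hi
      rw [Finset.mem_range] at hi
      rw [ih i, geomS, coeff_mk, if_neg (by omega)]
      have h1 : l + 1 + m - (l + i) - 1 = m - i := by omega
      rw [h1]
      have h2 : lam ^ i * lam ^ (m - i) = lam ^ m := by
        rw [← pow_add]
        congr 1
        omega
      calc lam ^ i * (((l + i - 1).choose i : ℕ) : ℝ) * lam ^ (m - i)
          = lam ^ i * lam ^ (m - i) * (((l + i - 1).choose i : ℕ) : ℝ) := by ring
        _ = lam ^ m * (((l + i - 1).choose i : ℕ) : ℝ) := by rw [h2]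
    rw [Finset.sum_congr rfl hterm, ← Finset.mul_sum]
    congr 1
    have hhs : ∑ i ∈ range (m + 1), (((l + i - 1).choose i : ℕ) : ℝ)
        = (((l + 1 + m - 1).choose m : ℕ) : ℝ) := by
      rw [← Nat.cast_sum]
      congr 1
      match l with
      | 0 =>
        rw [Finset.sum_eq_single 0]
        · simp
        · intro i _ hi
          exact Nat.choose_eq_zero_of_lt (by omega)
        · simp
      | (l+1) =>
        have h3 : ∀ i ∈ range (m + 1), (l + 1 + i - 1).choose i = (l + i).choose l := by
          intro i _
          have h4 : l + 1 + i - 1 = l + i := by omega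
          rw [h4, ← Nat.choose_symm (by omega : i ≤ l + i)]
          congr 1
          omega
        rw [Finset.sum_congr rfl h3]
        have h5 : ∑ i ∈ range (m + 1), (l + i).choose l = ∑ t ∈ Finset.Icc l (l + m), t.choose l := by
          rw [← Finset.Ico_add_one_right_eq_Icc, Finset.sum_Ico_eq_sum_range]
          apply Finset.sum_congr
          · congr 1
            omega
          · intro i _
            rfl
        rw [h5, Nat.sum_Icc_choose]
        have h6 : l + 1 + 1 + m - 1 = l + m + 1 := by omega
        rw [h6, ← Nat.choose_symm (by omega : l + 1 ≤ l + m + 1)]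
        congr 1
        omega
    rw [hhs]

include hlam in
lemma key_comp :
    pscomp (pscomp (Em1 lam) (geomS lam)) (degLogSeries' (-lam)) = PowerSeries.X := by
  have hL0 : PowerSeries.constantCoeff (R := ℝ) (degLogSeries' (-lam)) = 0 := cc_degLog
  rw [← pscomp_assoc cc_geomS hL0]
  set L := degLogSeries' (-lam) with hLdef
  set w := pscomp (geomS lam) L with hw
  have hwsolve : w * (1 - lam • L) = L := by
    have h1 := congrArg (fun f => pscomp f L) (geom_mul_eq_X (lam := lam))
    rw [pscomp_mul hL0, pscomp_sub, pscomp_one hL0, pscomp_smul, pscomp_X hL0] at h1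
    exact h1
  have hB : (1 : ℝ⟦X⟧) - lam • L = Bps (-lam) := one_sub_smul_degLog hlam
  have hBB : Bps (-lam) * Bps lam = 1 := by
    rw [Bps_mul, neg_add_cancel, Bps_zero]
  have hlw : lam • w = Bps lam - 1 := by
    have h2 : (lam • w) * Bps (-lam) = lam • L := by
      rw [← hB, smul_mul_assoc, hwsolve]
    have h3 : lam • L = 1 - Bps (-lam) := by
      rw [← hB]
      ring
    calc lam • w = lam • w * (Bps (-lam) * Bps lam) := by rw [hBB, mul_one]
      _ = ((lam • w) * Bps (-lam)) * Bps lam := by ring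
      _ = (1 - Bps (-lam)) * Bps lam := by rw [h2, h3]
      _ = Bps lam - 1 := by rw [sub_mul, one_mul, hBB]
  rw [Em1_eq_rescale hlam, pscomp_rescale_smul, hlw, pscomp_Bm1, mul_inv_cancel₀ hlam,
    Bps_one_eq]
  ring

include hlam in
lemma coeff_E_pow (i l : ℕ) :
    PowerSeries.coeff (R := ℝ) l ((1 + Em1 lam) ^ i) = dff lam (i : ℝ) l / (l.factorial : ℝ) := by
  have h1 : (1 : ℝ⟦X⟧) + Em1 lam = PowerSeries.rescale lam (Bps lam⁻¹) := by
    rw [Em1_eq_rescale hlam, map_sub, map_one]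
    ring
  rw [h1, ← map_pow, Bps_pow, PowerSeries.coeff_rescale, coeff_Bps, rchoose_eq]
  have h2 : lam ^ l * ffall ((i : ℕ) * lam⁻¹) l = dff lam (i : ℝ) l := by
    have h3 : dff lam (i : ℝ) l = ∏ t ∈ range l, (lam * ((i : ℕ) * lam⁻¹ - (t : ℝ))) := by
      rw [dff]
      apply Finset.prod_congr rfl
      intro t _
      rw [mul_sub, ← mul_assoc, mul_comm lam ((i:ℕ) : ℝ), mul_assoc, mul_inv_cancel₀ hlam,
        mul_one]
      ring
    rw [h3, Finset.prod_mul_distrib, Finset.prod_const, Finset.card_range, ffall]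
  rw [← h2]
  ring

lemma frise_nat (i k : ℕ) :
    frise (i : ℝ) k = (k.factorial : ℝ) * (((i + k - 1).choose k : ℕ) : ℝ) := by
  induction k with
  | zero => simp [frise]
  | succ k ih =>
    rw [frise, Finset.prod_range_succ, ← frise, ih]
    have hnat : (i + k - 1).choose k * (i + k) = (k + 1) * (i + k).choose (k + 1) := by
      rcases Nat.eq_zero_or_pos i with rfl | hi
      · rcases Nat.eq_zero_or_pos k with rfl | hk
        · simp
        · rw [Nat.choose_eq_zero_of_lt (by omega), Nat.choose_eq_zero_of_lt (by omega)]
          ring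
      · obtain ⟨s, rfl⟩ : ∃ s, i = s + 1 := ⟨i - 1, by omega⟩
        have h1 : s + 1 + k - 1 = s + k := by omega
        rw [h1]
        have hs := Nat.add_one_mul_choose_eq (s + k) k
        have h2 : s + k + 1 = s + 1 + k := by omega
        rw [h2] at hs
        rw [mul_comm ((s + k).choose k) (s + 1 + k), hs]
        ring
    have h4 : i + (k + 1) - 1 = i + k := by omega
    rw [h4]
    have hr : (((i + k - 1).choose k : ℕ) : ℝ) * (((i + k : ℕ) : ℕ) : ℝ)
        = (((k + 1) : ℕ) : ℝ) * (((i + k).choose (k + 1) : ℕ) : ℝ) := by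
      exact_mod_cast congrArg (fun t : ℕ => (t : ℝ)) hnat
    push_cast at hr ⊢
    rw [Nat.factorial_succ]
    push_cast
    nlinarith [hr]

lemma ffall_nat_zero {i k : ℕ} (h : i < k) : ffall (i : ℝ) k = 0 := by
  rw [ffall_nat, Nat.choose_eq_zero_of_lt h]
  simp

lemma uniq_ffall {m : ℕ} {a b : ℕ → ℝ}
    (h : ∀ i : ℕ, i ≤ m → ∑ k ∈ range (m + 1), a k * ffall (i : ℝ) k
      = ∑ k ∈ range (m + 1), b k * ffall (i : ℝ) k) :
    ∀ k, k ≤ m → a k = b k := by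
  intro k
  induction k using Nat.strong_induction_on with
  | _ k ih =>
    intro hkm
    have hk := h k hkm
    have hsplit : ∀ c : ℕ → ℝ, ∑ t ∈ range (m + 1), c t * ffall (k : ℝ) t
        = (∑ t ∈ range k, c t * ffall (k : ℝ) t) + c k * ffall (k : ℝ) k := by
      intro c
      rw [← Finset.sum_range_succ]
      symm
      apply Finset.sum_subset (Finset.range_subset_range.2 (by omega))
      intro t _ ht
      rw [ffall_nat_zero (by simpa using ht), mul_zero]
    rw [hsplit a, hsplit b] at hk
    have heq : ∑ t ∈ range k, a t * ffall (k : ℝ) t = ∑ t ∈ range k, b t * ffall (k : ℝ) t :=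
      Finset.sum_congr rfl (fun t ht =>
        by rw [ih t (Finset.mem_range.1 ht) (le_trans (Nat.le_of_lt (Finset.mem_range.1 ht)) hkm)])
    have hke : a k * ffall (k : ℝ) k = b k * ffall (k : ℝ) k := by linarith
    have hne : ffall ((k : ℕ) : ℝ) k ≠ 0 := by
      rw [ffall_nat, Nat.choose_self]
      simp [Nat.factorial_ne_zero]
    exact mul_right_cancel₀ hne hke

include hlam in
lemma dff_eq_sum_Sc (l i : ℕ) :
    dff lam (i : ℝ) l = ∑ k ∈ range (l + 1),
      ((l.factorial : ℝ) * PowerSeries.coeff (R := ℝ) l (Em1 lam ^ k) / (k.factorial : ℝ)) * ffall (i : ℝ) k := by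
  have h1 : ∀ k ∈ range (l + 1),
      ((l.factorial : ℝ) * PowerSeries.coeff (R := ℝ) l (Em1 lam ^ k) / (k.factorial : ℝ)) * ffall (i : ℝ) k
        = (l.factorial : ℝ) * ((i.choose k : ℝ) * PowerSeries.coeff (R := ℝ) l (Em1 lam ^ k)) := by
    intro k _
    rw [ffall_nat]
    have : (k.factorial : ℝ) ≠ 0 := by exact_mod_cast k.factorial_ne_zero
    field_simp
  rw [Finset.sum_congr rfl h1, ← Finset.mul_sum, ← coeff_one_add_pow cc_Em1 i l,
    coeff_E_pow hlam]
  have : (l.factorial : ℝ) ≠ 0 := by exact_mod_cast l.factorial_ne_zero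
  field_simp

lemma frise_eq_sum_Lt (k i : ℕ) :
    frise (i : ℝ) k = ∑ l ∈ range (k + 1),
      ((k.factorial : ℝ) / (l.factorial : ℝ) * (((k - 1).choose (k - l) : ℕ) : ℝ)) * ffall (i : ℝ) l := by
  have h1 : ∀ l ∈ range (k + 1),
      ((k.factorial : ℝ) / (l.factorial : ℝ) * (((k - 1).choose (k - l) : ℕ) : ℝ)) * ffall (i : ℝ) l
        = (k.factorial : ℝ) * ((((k - 1).choose (k - l) : ℕ) : ℝ) * (i.choose l : ℝ)) := by
    intro l _
    rw [ffall_nat]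
    have : (l.factorial : ℝ) ≠ 0 := by exact_mod_cast l.factorial_ne_zero
    field_simp
  rw [Finset.sum_congr rfl h1, ← Finset.mul_sum, frise_nat]
  congr 1
  have hnat : ∑ l ∈ range (k + 1), (k - 1).choose (k - l) * i.choose l = (i + k - 1).choose k := by
    rcases Nat.eq_zero_or_pos k with rfl | hk
    · simp
    · have h2 : i + k - 1 = (k - 1) + i := by omega
      rw [h2, Nat.add_choose_eq, Finset.Nat.sum_antidiagonal_eq_sum_range_succ_mk,
        ← Finset.sum_range_reflect]
      apply Finset.sum_congr rfl
      intro l hl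
      have hl' : l < k + 1 := Finset.mem_range.1 hl
      have h3 : k + 1 - 1 - l = k - l := by omega
      rw [h3]
      have h4 : k - (k - l) = l := by omega
      rw [h4]
  exact_mod_cast congrArg (fun t : ℕ => (t : ℝ)) hnat.symm

end Lam

end PsTool

open PowerSeries PsTool in
theorem braceY_eq_sum_S1Y_Lah_degStirling2 {Ω : Type*} [MeasurableSpace Ω] (μ : MeasureTheory.Measure Ω)
    [MeasureTheory.IsProbabilityMeasure μ] (Y : Ω → ℝ) (hY : Measurable Y)
    (hmom : ∀ n : ℕ, MeasureTheory.Integrable (fun ω => |Y ω| ^ n) μ)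
    (lam : ℝ) (hlam : lam ≠ 0)
    (St2 : ℕ → ℕ → ℝ)
    (hSt2 : ∀ (x : ℝ) (n : ℕ),
      dff lam x n = ∑ k ∈ Finset.range (n + 1), St2 n k * ffall x k)
    (Lah : ℕ → ℕ → ℝ)
    (hLah : ∀ (x : ℝ) (n : ℕ),
      frise x n = ∑ k ∈ Finset.range (n + 1), Lah n k * ffall x k)
    (n j : ℕ) (hjn : j ≤ n) :
    braceY lam μ Y n j =
      ∑ l ∈ Finset.Icc j n, ∑ k ∈ Finset.Icc l n,
        lam ^ (k - l) * (-1 : ℝ) ^ (n - k) * S1Y lam μ Y n k * Lah k l * St2 l j := by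
  classical
  set A := momSeries lam μ Y - 1 with hA
  have hA0 : PowerSeries.constantCoeff (R := ℝ) A = 0 := by
    rw [hA, map_sub, map_one, ← coeff_zero_eq_constantCoeff_apply, momSeries, coeff_mk]
    simp [dff]
  set L := degLogSeries (-lam) with hLdef
  have hLL : L = degLogSeries' (-lam) := rfl
  have hL0 : PowerSeries.constantCoeff (R := ℝ) L = 0 := by rw [hLL]; exact cc_degLog
  have hGA : cumSeries lam μ Y = pscomp L A := rfl
  have hG0 : PowerSeries.constantCoeff (R := ℝ) (cumSeries lam μ Y) = 0 := by
    rw [hGA, constantCoeff_pscomp, coeff_zero_eq_constantCoeff_apply, hL0]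
  set G := cumSeries lam μ Y with hGdef
  set W := pscomp (geomS lam) G with hW
  have hpLA0 : PowerSeries.constantCoeff (R := ℝ) (pscomp L A) = 0 := by rw [← hGA]; exact hG0
  have hW0 : PowerSeries.constantCoeff (R := ℝ) W = 0 := by
    rw [hW, constantCoeff_pscomp, coeff_zero_eq_constantCoeff_apply, cc_geomS]
  -- identification of St2 and Lah with canonical values
  have hSt2v : ∀ l, j ≤ l →
      St2 l j = (l.factorial : ℝ) * PowerSeries.coeff (R := ℝ) l (Em1 lam ^ j) / (j.factorial : ℝ) := by
    intro l hjl
    exact uniq_ffall (m := l) (a := St2 l)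
      (b := fun k => (l.factorial : ℝ) * PowerSeries.coeff (R := ℝ) l (Em1 lam ^ k) / (k.factorial : ℝ))
      (fun i _ => by rw [← hSt2 (i : ℝ) l, ← dff_eq_sum_Sc hlam l i]) j hjl
  have hLahv : ∀ k l, l ≤ k →
      Lah k l = (k.factorial : ℝ) / (l.factorial : ℝ) * (((k - 1).choose (k - l) : ℕ) : ℝ) := by
    intro k l hlk
    exact uniq_ffall (m := k) (a := Lah k)
      (b := fun l' => (k.factorial : ℝ) / (l'.factorial : ℝ) * (((k - 1).choose (k - l') : ℕ) : ℝ))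
      (fun i _ => by rw [← hLah (i : ℝ) k, ← frise_eq_sum_Lt k i]) l hlk
  have hsign : ∀ m : ℕ, ((-1 : ℝ)) ^ m * (-1 : ℝ) ^ m = 1 := by
    intro m
    rw [← pow_add]
    exact Even.neg_one_pow ⟨m, by ring⟩
  have hsummand : ∀ l ∈ Finset.Icc j n, ∀ k ∈ Finset.Icc l n,
      lam ^ (k - l) * (-1 : ℝ) ^ (n - k) * S1Y lam μ Y n k * Lah k l * St2 l j
        = ((n.factorial : ℝ) / (j.factorial : ℝ)) *
          (PowerSeries.coeff (R := ℝ) l (Em1 lam ^ j) * (PowerSeries.coeff (R := ℝ) k (geomS lam ^ l) * PowerSeries.coeff (R := ℝ) n (G ^ k))) := by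
    intro l hl k hk
    obtain ⟨hjl, hln⟩ := Finset.mem_Icc.1 hl
    obtain ⟨hlk, hkn⟩ := Finset.mem_Icc.1 hk
    have hgeom : PowerSeries.coeff (R := ℝ) k (geomS lam ^ l)
        = lam ^ (k - l) * (((k - 1).choose (k - l) : ℕ) : ℝ) := by
      have h0 := coeff_geomS_pow (lam := lam) l (k - l)
      rw [(by omega : l + (k - l) = k)] at h0
      rw [h0]
    have hkey : (-1 : ℝ) ^ (n - k) * S1Y lam μ Y n k
        = (n.factorial : ℝ) * PowerSeries.coeff (R := ℝ) n (G ^ k) / (k.factorial : ℝ) := by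
      simp only [S1Y, ← hGdef]
      rw [← mul_assoc, hsign, one_mul]
    rw [hSt2v l hjl, hLahv k l hlk, hgeom,
      mul_assoc (lam ^ (k - l)) ((-1 : ℝ) ^ (n - k)) (S1Y lam μ Y n k), hkey]
    have hk0 : (k.factorial : ℝ) ≠ 0 := by exact_mod_cast k.factorial_ne_zero
    have hl0 : (l.factorial : ℝ) ≠ 0 := by exact_mod_cast l.factorial_ne_zero
    have hj0 : (j.factorial : ℝ) ≠ 0 := by exact_mod_cast j.factorial_ne_zero
    field_simp
  have hGLA : G = pscomp L A := hGA
  have hEA : pscomp (Em1 lam) W = A := by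
    rw [hW, hGLA, pscomp_assoc cc_geomS hpLA0, pscomp_assoc hL0 hA0, hLL, key_comp hlam,
      pscomp_X hA0]
  have hext : ∑ l ∈ Finset.Icc j n, ∑ k ∈ Finset.Icc l n,
        PowerSeries.coeff (R := ℝ) l (Em1 lam ^ j) * (PowerSeries.coeff (R := ℝ) k (geomS lam ^ l) * PowerSeries.coeff (R := ℝ) n (G ^ k))
      = ∑ l ∈ range (n + 1), ∑ k ∈ range (n + 1),
        PowerSeries.coeff (R := ℝ) l (Em1 lam ^ j) * (PowerSeries.coeff (R := ℝ) k (geomS lam ^ l) * PowerSeries.coeff (R := ℝ) n (G ^ k)) := by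
    have hinner : ∀ l ∈ Finset.Icc j n,
        ∑ k ∈ Finset.Icc l n, PowerSeries.coeff (R := ℝ) l (Em1 lam ^ j) * (PowerSeries.coeff (R := ℝ) k (geomS lam ^ l) * PowerSeries.coeff (R := ℝ) n (G ^ k))
          = ∑ k ∈ range (n + 1), PowerSeries.coeff (R := ℝ) l (Em1 lam ^ j) * (PowerSeries.coeff (R := ℝ) k (geomS lam ^ l) * PowerSeries.coeff (R := ℝ) n (G ^ k)) := by
      intro l hl
      apply Finset.sum_subset
      · intro k hk
        exact Finset.mem_range.2 (by have := (Finset.mem_Icc.1 hk).2; omega)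
      · intro k hk hk2
        have hkn : k ≤ n := by have := Finset.mem_range.1 hk; omega
        have hkl : k < l := by
          by_contra hcon
          exact hk2 (Finset.mem_Icc.2 ⟨by omega, hkn⟩)
        rw [coeff_pow_zero cc_geomS hkl, zero_mul, mul_zero]
    rw [Finset.sum_congr rfl hinner]
    apply Finset.sum_subset
    · intro l hl
      exact Finset.mem_range.2 (by have := (Finset.mem_Icc.1 hl).2; omega)
    · intro l hl hl2
      have hln : l ≤ n := by have := Finset.mem_range.1 hl; omega
      have hlj : l < j := by
        by_contra hcon
        exact hl2 (Finset.mem_Icc.2 ⟨by omega, hln⟩)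
      apply Finset.sum_eq_zero
      intro k _
      rw [coeff_pow_zero cc_Em1 hlj, zero_mul]
  have hrec : ∑ l ∈ range (n + 1), ∑ k ∈ range (n + 1),
        PowerSeries.coeff (R := ℝ) l (Em1 lam ^ j) * (PowerSeries.coeff (R := ℝ) k (geomS lam ^ l) * PowerSeries.coeff (R := ℝ) n (G ^ k))
      = PowerSeries.coeff (R := ℝ) n (A ^ j) := by
    have h1 : ∀ l ∈ range (n + 1),
        ∑ k ∈ range (n + 1), PowerSeries.coeff (R := ℝ) l (Em1 lam ^ j) * (PowerSeries.coeff (R := ℝ) k (geomS lam ^ l) * PowerSeries.coeff (R := ℝ) n (G ^ k))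
          = PowerSeries.coeff (R := ℝ) l (Em1 lam ^ j) * PowerSeries.coeff (R := ℝ) n (W ^ l) := by
      intro l _
      rw [← Finset.mul_sum]
      congr 1
      rw [hW, ← pscomp_pow hG0, coeff_pscomp]
    rw [Finset.sum_congr rfl h1, ← coeff_pscomp, pscomp_pow hW0, hEA]
  calc braceY lam μ Y n j
      = ((n.factorial : ℝ) / (j.factorial : ℝ)) * PowerSeries.coeff (R := ℝ) n (A ^ j) := by
        simp only [braceY]
        rw [← hA]
        ring
    _ = ((n.factorial : ℝ) / (j.factorial : ℝ)) *
          ∑ l ∈ Finset.Icc j n, ∑ k ∈ Finset.Icc l n,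
            PowerSeries.coeff (R := ℝ) l (Em1 lam ^ j) * (PowerSeries.coeff (R := ℝ) k (geomS lam ^ l) * PowerSeries.coeff (R := ℝ) n (G ^ k)) := by
        rw [hext, hrec]
    _ = ∑ l ∈ Finset.Icc j n, ∑ k ∈ Finset.Icc l n,
          ((n.factorial : ℝ) / (j.factorial : ℝ)) *
            (PowerSeries.coeff (R := ℝ) l (Em1 lam ^ j) * (PowerSeries.coeff (R := ℝ) k (geomS lam ^ l) * PowerSeries.coeff (R := ℝ) n (G ^ k))) := by
        rw [Finset.mul_sum]
        apply Finset.sum_congr rfl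
        intro l _
        rw [Finset.mul_sum]
    _ = ∑ l ∈ Finset.Icc j n, ∑ k ∈ Finset.Icc l n,
          lam ^ (k - l) * (-1 : ℝ) ^ (n - k) * S1Y lam μ Y n k * Lah k l * St2 l j := by
        symm
        exact Finset.sum_congr rfl fun l hl => Finset.sum_congr rfl (hsummand l hl)


end
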